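/- arXiv:2306.01767 — 3 statements merged into one kernel-verified Lean document; each statement's English description precedes it below -/
import Mathlib

section
/- The polynomial $\phi(x) = x^2 - x + 5$ is irreducible modulo $2$ and modulo $3$, and the polynomial $\frac{1}{3}\phi(x)^4 - 3$ is reducible over $\mathbb{Q}$. -/
open Polynomial

/-- `u j` is the product of all odd positive integers `≤ j`. -/
def u (j : ℕ) : ℕ := ∏ i ∈ Finset.filter (fun i => Odd i) (Finset.range (j+1)), i

lemma aux_irred (n : ℕ) [Fact (Nat.Prime n)]
    (h : ∀ a : ZMod n, a ^ 2 - a + 5 ≠ 0) :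
    Irreducible ((X^2 - X + C 5 : ℤ[X]).map (Int.castRingHom (ZMod n))) := by
  have hmap : (X^2 - X + C 5 : ℤ[X]).map (Int.castRingHom (ZMod n))
      = (X^2 - X + C 5 : (ZMod n)[X]) := by
    simp [Polynomial.map_add, Polynomial.map_sub, Polynomial.map_pow, map_ofNat]
  rw [hmap]
  have hdeg : (X^2 - X + C 5 : (ZMod n)[X]).natDegree = 2 := by
    compute_degree!
  rw [irreducible_iff_roots_eq_zero_of_degree_le_three (by omega) (by omega)]
  rw [Multiset.eq_zero_iff_forall_notMem]
  intro a ha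
  have hne : (X^2 - X + C 5 : (ZMod n)[X]) ≠ 0 := fun h0 => by
    rw [h0] at hdeg; simp at hdeg
  rw [mem_roots hne, IsRoot] at ha
  simp only [eval_add, eval_sub, eval_pow, eval_X, eval_C] at ha
  exact h a ha

theorem stmt_7 :
    Irreducible ((X^2 - X + C 5 : ℤ[X]).map (Int.castRingHom (ZMod 2))) ∧
    Irreducible ((X^2 - X + C 5 : ℤ[X]).map (Int.castRingHom (ZMod 3))) ∧
    ¬ Irreducible (C (3:ℚ)⁻¹ * ((X^2 - X + C 5 : ℤ[X]).map (Int.castRingHom ℚ))^4 - C 3) := by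
  refine ⟨aux_irred 2 (by decide), aux_irred 3 (by decide), ?_⟩
  set q : ℚ[X] := (X^2 - X + C 5 : ℤ[X]).map (Int.castRingHom ℚ) with hq
  have hqdeg : q.natDegree = 2 := by
    rw [hq]
    have : (X^2 - X + C 5 : ℤ[X]).map (Int.castRingHom ℚ) = (X^2 - X + C 5 : ℚ[X]) := by
      simp [Polynomial.map_add, Polynomial.map_sub, Polynomial.map_pow, map_ofNat]
    rw [this]
    compute_degree!
  have hfac : C (3:ℚ)⁻¹ * q^4 - C 3
      = (C (3:ℚ)⁻¹ * (q^2 - C 3)) * (q^2 + C 3) := by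
    ring_nf
    rw [← C_pow, ← C_mul]
    norm_num
  intro hirr
  rcases hirr.isUnit_or_isUnit hfac with h | h
  · have hd : (C (3:ℚ)⁻¹ * (q^2 - C 3)).natDegree = 4 := by
      rw [natDegree_C_mul (by norm_num)]
      have h2 : (q^2).natDegree = 4 := by rw [natDegree_pow, hqdeg]
      rw [natDegree_sub_C, h2]
    exact absurd (natDegree_eq_zero_of_isUnit h) (by omega)
  · have hd : (q^2 + C 3).natDegree = 4 := by
      have h2 : (q^2).natDegree = 4 := by rw [natDegree_pow, hqdeg]
      rw [natDegree_add_C, h2]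
    exact absurd (natDegree_eq_zero_of_isUnit h) (by omega)
end

section
/- Let $n \geq 1$ be an integer, $p$ a prime, and $\phi(x) \in \mathbb{Z}[x]$ a monic polynomial irreducible modulo $p$. Let $a_0(x), \dots, a_{n-1}(x) \in \mathbb{Z}[x]$ each have degree less than $\deg \phi(x)$, let $a_n$ be an integer with $p \nmid a_n$, and let $b_0, \dots, b_{n-1}$ be integers each divisible by $p$. Then the polynomial $F(x) = a_n \phi(x)^{2n} + \sum_{j=0}^{n-1} b_j a_j(x) \phi(x)^{2j}$ has no nonconstant factor in $\mathbb{Z}[x]$ of degree less than $\deg \phi(x)$. -/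
open Polynomial

theorem stmt_11 (n : ℕ) (hn : 1 ≤ n) (p : ℕ) (hp : p.Prime)
    (φ : ℤ[X]) (hmonic : φ.Monic)
    (hirr : Irreducible (φ.map (Int.castRingHom (ZMod p))))
    (a : ℕ → ℤ[X]) (hdeg : ∀ i < n, (a i).natDegree < φ.natDegree)
    (an : ℤ) (han : ¬ ((p : ℤ) ∣ an))
    (b : ℕ → ℤ) (hb : ∀ j < n, (p : ℤ) ∣ b j) :
    ∀ d : ℤ[X], d ∣ (C an * φ ^ (2*n)
        + ∑ j ∈ Finset.range n, C (b j) * a j * φ ^ (2*j)) →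
      0 < d.natDegree → d.natDegree < φ.natDegree → False := by
  intro d hdvd hd0 hdφ
  haveI : Fact p.Prime := ⟨hp⟩
  set ρ := Int.castRingHom (ZMod p)
  set ψ := φ.map ρ with hψ
  set F := C an * φ ^ (2*n) + ∑ j ∈ Finset.range n, C (b j) * a j * φ ^ (2*j) with hF
  have hψdeg : ψ.natDegree = φ.natDegree := hmonic.natDegree_map ρ
  have hφpos : 0 < φ.natDegree := by
    have := hirr.natDegree_pos
    omega
  have han0 : an ≠ 0 := fun h => han (h ▸ dvd_zero _)
  -- leading coefficient of F is an
  have hlead1 : (C an * φ ^ (2*n)).natDegree = 2*n * φ.natDegree := by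
    rw [natDegree_C_mul han0, natDegree_pow]
  have hSdeg : (∑ j ∈ Finset.range n, C (b j) * a j * φ ^ (2*j)).degree
      < (C an * φ ^ (2*n)).degree := by
    have hne : C an * φ ^ (2*n) ≠ 0 :=
      mul_ne_zero (by simpa using han0) (pow_ne_zero _ hmonic.ne_zero)
    have hbig : (C an * φ ^ (2*n)).degree = (2*n * φ.natDegree : ℕ) := by
      rw [degree_eq_natDegree hne, hlead1]
    rw [hbig]
    apply lt_of_le_of_lt (degree_sum_le _ _)
    apply Finset.sup_lt_iff (by exact_mod_cast WithBot.bot_lt_coe _) |>.mpr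
    intro j hj
    rw [Finset.mem_range] at hj
    apply lt_of_le_of_lt (degree_mul_le _ _)
    apply lt_of_le_of_lt (add_le_add (degree_mul_le _ _) (le_refl _))
    have h1 : (C (b j)).degree ≤ 0 := degree_C_le
    have h2 : (a j).degree ≤ ((φ.natDegree - 1 : ℕ) : WithBot ℕ) := by
      apply le_trans degree_le_natDegree
      have := hdeg j hj
      exact_mod_cast (show (a j).natDegree ≤ φ.natDegree - 1 by omega)
    have h3 : (φ ^ (2*j)).degree ≤ ((2*j * φ.natDegree : ℕ) : WithBot ℕ) := by
      rw [degree_pow]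
      apply le_trans (nsmul_le_nsmul_right degree_le_natDegree _)
      simp [Nat.cast_mul]
    calc (C (b j)).degree + (a j).degree + (φ ^ (2*j)).degree
        ≤ 0 + ((φ.natDegree - 1 : ℕ) : WithBot ℕ) + ((2*j * φ.natDegree : ℕ) : WithBot ℕ) :=
          add_le_add (add_le_add h1 h2) h3
      _ = (((φ.natDegree - 1) + 2*j * φ.natDegree : ℕ) : WithBot ℕ) := by
          rw [zero_add, ← Nat.cast_add]
      _ < ((2*n * φ.natDegree : ℕ) : WithBot ℕ) := by
          have hstep : (φ.natDegree - 1) + 2*j * φ.natDegree < 2*n * φ.natDegree := by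
            have h5 : (2*j+1) * φ.natDegree ≤ 2*n * φ.natDegree :=
              Nat.mul_le_mul_right _ (by omega)
            have h6 : (2*j+1) * φ.natDegree = φ.natDegree + 2*j*φ.natDegree := by ring
            omega
          exact_mod_cast hstep
  have hleadF : F.leadingCoeff = an := by
    rw [hF, add_comm, leadingCoeff_add_of_degree_lt hSdeg, leadingCoeff_mul,
      leadingCoeff_pow, hmonic.leadingCoeff, one_pow, mul_one, leadingCoeff_C]
  -- p does not divide leading coeff of d
  obtain ⟨e, he⟩ := hdvd
  have hFne : F ≠ 0 := fun h => han0 (by rw [← hleadF, h, leadingCoeff_zero])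
  have hmul : d.leadingCoeff * e.leadingCoeff = an := by
    rw [← leadingCoeff_mul, ← he, hleadF]
  have hpd : ¬ ((p : ℤ) ∣ d.leadingCoeff) := by
    intro h
    exact han (hmul ▸ h.mul_right _)
  have hρd : ρ d.leadingCoeff ≠ 0 := by
    intro h
    exact hpd ((ZMod.intCast_zmod_eq_zero_iff_dvd _ _).mp h)
  have hmapdeg : (d.map ρ).natDegree = d.natDegree :=
    natDegree_map_of_leadingCoeff_ne_zero ρ hρd
  -- F mod p
  have hFmap : F.map ρ = C (ρ an) * ψ ^ (2*n) := by
    rw [hF, Polynomial.map_add, Polynomial.map_mul, Polynomial.map_pow, map_C,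
      Polynomial.map_sum]
    have : ∀ j ∈ Finset.range n, (C (b j) * a j * φ ^ (2*j)).map ρ = 0 := by
      intro j hj
      rw [Finset.mem_range] at hj
      rw [Polynomial.map_mul, Polynomial.map_mul, map_C]
      have : ρ (b j) = 0 := (ZMod.intCast_zmod_eq_zero_iff_dvd _ _).mpr (hb j hj)
      rw [this, map_zero, zero_mul, zero_mul]
    rw [Finset.sum_congr rfl this, Finset.sum_const_zero, add_zero]
  have hdvd' : d.map ρ ∣ ψ ^ (2*n) := by
    have h1 : d.map ρ ∣ F.map ρ := Polynomial.map_dvd ρ ⟨e, he⟩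
    rw [hFmap] at h1
    have hu : IsUnit (C (ρ an)) := by
      apply isUnit_C.mpr
      apply isUnit_iff_ne_zero.mpr
      intro h
      exact han ((ZMod.intCast_zmod_eq_zero_iff_dvd _ _).mp h)
    exact (hu.dvd_mul_left).mp h1
  obtain ⟨i, hi, hassoc⟩ := (dvd_prime_pow hirr.prime (2*n)).mp hdvd'
  obtain ⟨v, hv⟩ := hassoc
  have hvdeg : (v : (ZMod p)[X]).natDegree = 0 := natDegree_eq_zero_of_isUnit v.isUnit
  have hdne : d.map ρ ≠ 0 := by
    intro h
    rw [h, natDegree_zero] at hmapdeg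
    omega
  have hv' := congrArg natDegree hv
  rw [natDegree_mul hdne (Units.ne_zero v), hvdeg, add_zero, natDegree_pow,
    hmapdeg, hψdeg] at hv'
  rcases Nat.eq_zero_or_pos i with h0 | h1
  · rw [h0] at hv'; simp at hv'; omega
  · have hge : φ.natDegree ≤ i * φ.natDegree := Nat.le_mul_of_pos_left _ h1
    omega
end

section
/- For integers $n > 2$, if $2n+1 \neq 25$, then at least one of the two numbers $2n+1, 2n+3$ is divisible by a prime $p > 5$. -/
open Polynomial

set_option maxRecDepth 10000

lemma pow_mod_cycle (g o m b : ℕ) (h : g ^ o % m = 1) :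
    g ^ b % m = g ^ (b % o) % m := by
  conv_lhs => rw [← Nat.div_add_mod b o, pow_add, pow_mul, Nat.mul_mod,
    Nat.pow_mod, h, one_pow, ← Nat.mul_mod, one_mul]

lemma smooth35 : ∀ m : ℕ, 0 < m → (∀ p, p.Prime → p ∣ m → p = 3 ∨ p = 5) →
    ∃ a b, m = 3^a * 5^b := by
  intro m
  induction m using Nat.strong_induction_on with
  | _ m ih =>
    intro hm hp
    rcases eq_or_lt_of_le (Nat.succ_le_of_lt hm) with h1 | h1
    · exact ⟨0, 0, by omega⟩
    · have hpf := Nat.minFac_prime (show m ≠ 1 by omega)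
      have pd := Nat.minFac_dvd m
      have hp35 := hp _ hpf pd
      obtain ⟨k, hk⟩ := pd
      have h2 : 2 ≤ m.minFac := hpf.two_le
      have hk0 : 0 < k := by
        rcases Nat.eq_zero_or_pos k with h | h
        · subst h; simp at hk; omega
        · exact h
      have hklt : k < m := by nlinarith
      obtain ⟨a, b, hab⟩ := ih k hklt hk0
        (fun q hq hqd => hp q hq (hk ▸ Dvd.dvd.mul_left hqd m.minFac))
      rcases hp35 with h3 | h3
      · exact ⟨a + 1, b, by rw [hk, h3, hab]; ring⟩
      · exact ⟨a, b + 1, by rw [hk, h3, hab]; ring⟩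

/-- No solution to `5^d = 3^a + 2` with `a ≥ 2`. -/
lemma caseB (a d : ℕ) (ha : 2 ≤ a) (h : 5^d = 3^a + 2) : False := by
  -- mod 4 : a is odd
  have ha2 : a % 2 = 1 := by
    have e : 5^d % 4 = (3^a + 2) % 4 := by rw [h]
    rw [pow_mod_cycle 5 1 4 d (by norm_num), Nat.mod_one, Nat.add_mod,
      pow_mod_cycle 3 2 4 a (by norm_num)] at e
    have hlt := Nat.mod_lt a (show 0 < 2 by norm_num)
    interval_cases h' : a % 2 <;> first | rfl | norm_num at e
  have ha3 : 3 ≤ a := by omega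
  -- mod 27 : d % 18 = 11
  obtain ⟨k, hk⟩ := (by
    calc (27:ℕ) = 3^3 := by norm_num
    _ ∣ 3^a := Nat.pow_dvd_pow 3 ha3 : (27:ℕ) ∣ 3^a)
  have e27 : 5 ^ (d % 18) % 27 = 2 := by
    rw [← pow_mod_cycle 5 18 27 d (by norm_num), h, hk]
    omega
  have hd18 : d % 18 = 11 := by
    have hlt := Nat.mod_lt d (show 0 < 18 by norm_num)
    have : ∀ r < 18, 5 ^ r % 27 = 2 → r = 11 := by decide
    exact this _ hlt e27
  -- mod 7 : a ≡ 0 mod 6, contradiction with a odd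
  have hd6 : d % 6 = 5 := by
    have : d % 6 = d % 18 % 6 := (Nat.mod_mod_of_dvd d (by norm_num)).symm
    omega
  have e7 : 3 ^ (a % 6) % 7 = 1 := by
    have e : 5^d % 7 = (3^a + 2) % 7 := by rw [h]
    rw [pow_mod_cycle 5 6 7 d (by norm_num), hd6, Nat.add_mod,
      pow_mod_cycle 3 6 7 a (by norm_num)] at e
    have h1 : (5:ℕ)^5 % 7 = 3 := by norm_num
    omega
  have ha6 : a % 6 = 0 := by
    have hlt := Nat.mod_lt a (show 0 < 6 by norm_num)
    have : ∀ r < 6, 3 ^ r % 7 = 1 → r = 0 := by decide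
    exact this _ hlt e7
  have : a % 2 = a % 6 % 2 := (Nat.mod_mod_of_dvd a (by norm_num)).symm
  omega

/-- The only solution to `3^c = 5^b + 2` with `b ≥ 2` is `(c,b) = (3,2)`. -/
lemma caseA (c b : ℕ) (hb : 2 ≤ b) (h : 3^c = 5^b + 2) : c = 3 ∧ b = 2 := by
  have h5b : (25:ℕ) ≤ 5^b := by
    calc (25:ℕ) = 5^2 := by norm_num
    _ ≤ 5^b := Nat.pow_le_pow_right (by norm_num) hb
  -- mod 4 : c odd
  have hc2 : c % 2 = 1 := by
    have e : 3^c % 4 = (5^b + 2) % 4 := by rw [h]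
    rw [pow_mod_cycle 3 2 4 c (by norm_num), Nat.add_mod,
      pow_mod_cycle 5 1 4 b (by norm_num), Nat.mod_one] at e
    have hlt := Nat.mod_lt c (show 0 < 2 by norm_num)
    interval_cases h' : c % 2 <;> first | rfl | norm_num at e
  have hc3 : 3 ≤ c := by
    rcases Nat.lt_or_ge c 3 with h' | h'
    · exfalso; interval_cases c <;> omega
    · exact h'
  -- mod 27 : b % 18 = 2
  obtain ⟨k, hk⟩ := (by
    calc (27:ℕ) = 3^3 := by norm_num
    _ ∣ 3^c := Nat.pow_dvd_pow 3 hc3 : (27:ℕ) ∣ 3^c)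
  have e27 : 5 ^ (b % 18) % 27 = 25 := by
    rw [← pow_mod_cycle 5 18 27 b (by norm_num)]
    have : (5^b + 2) % 27 = 0 := by rw [← h, hk]; omega
    omega
  have hb18 : b % 18 = 2 := by
    have hlt := Nat.mod_lt b (show 0 < 18 by norm_num)
    have : ∀ r < 18, 5 ^ r % 27 = 25 → r = 2 := by decide
    exact this _ hlt e27
  rcases Nat.eq_or_lt_of_le hb with hb2 | hb2
  · -- b = 2 : then 3^c = 27 so c = 3
    refine ⟨?_, hb2.symm⟩
    have : 3^c = 3^3 := by rw [h, ← hb2]; norm_num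
    exact Nat.pow_right_injective (by norm_num) this
  · -- b ≥ 3 : contradiction
    exfalso
    have hb3 : 3 ≤ b := hb2
    obtain ⟨k5, hk5⟩ := (by
      calc (125:ℕ) = 5^3 := by norm_num
      _ ∣ 5^b := Nat.pow_dvd_pow 5 hb3 : (125:ℕ) ∣ 5^b)
    have e125 : 3 ^ (c % 100) % 125 = 2 := by
      rw [← pow_mod_cycle 3 100 125 c (by norm_num), h, hk5]
      omega
    have hc100 : c % 100 = 43 := by
      have hlt := Nat.mod_lt c (show 0 < 100 by norm_num)
      have : ∀ r < 100, 3 ^ r % 125 = 2 → r = 43 := by decide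
      exact this _ hlt e125
    have hc5 : 5 ≤ c := by omega
    -- mod 243 : b % 162 = 74
    obtain ⟨k3, hk3⟩ := (by
      calc (243:ℕ) = 3^5 := by norm_num
      _ ∣ 3^c := Nat.pow_dvd_pow 3 hc5 : (243:ℕ) ∣ 3^c)
    have e243 : 5 ^ (b % 162) % 243 = 241 := by
      rw [← pow_mod_cycle 5 162 243 b (by norm_num)]
      have : (5^b + 2) % 243 = 0 := by rw [← h, hk3]; omega
      omega
    have hb162 : b % 162 = 74 := by
      have hlt := Nat.mod_lt b (show 0 < 162 by norm_num)
      have : ∀ r < 162, 5 ^ r % 243 = 241 → r = 74 := by decide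
      exact this _ hlt e243
    -- mod 109 : final contradiction
    have hb27 : b % 27 = 20 := by
      have : b % 27 = b % 162 % 27 := (Nat.mod_mod_of_dvd b (by norm_num)).symm
      omega
    have e109 : 3 ^ (c % 27) % 109 = (5 ^ 20 + 2) % 109 := by
      rw [← pow_mod_cycle 3 27 109 c (by norm_num), h, Nat.add_mod,
        pow_mod_cycle 5 27 109 b (by norm_num), hb27, ← Nat.add_mod]
    have hlt := Nat.mod_lt c (show 0 < 27 by norm_num)
    have : ∀ r < 27, 3 ^ r % 109 ≠ (5 ^ 20 + 2) % 109 := by decide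
    exact this _ hlt e109

theorem stmt_13 (n : ℕ) (hn : 2 < n) (h25 : 2*n+1 ≠ 25) :
    ∃ p : ℕ, p.Prime ∧ 5 < p ∧ (p ∣ (2*n+1) ∨ p ∣ (2*n+3)) := by
  by_contra hcon
  push_neg at hcon
  have key : ∀ m : ℕ, (m = 2*n+1 ∨ m = 2*n+3) → ∀ p, p.Prime → p ∣ m → p = 3 ∨ p = 5 := by
    intro m hm p hp hpd
    have hple : p ≤ 5 := by
      by_contra h5
      push_neg at h5
      rcases hm with hm | hm
      · exact (hcon p hp h5).1 (hm ▸ hpd)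
      · exact (hcon p hp h5).2 (hm ▸ hpd)
    have h2 := hp.two_le
    interval_cases p
    · exfalso; obtain ⟨k, hk⟩ := hpd; rcases hm with hm | hm <;> omega
    · left; rfl
    · exact absurd hp (by norm_num)
    · right; rfl
  obtain ⟨a, b, hab⟩ := smooth35 (2*n+1) (by omega) (key _ (Or.inl rfl))
  obtain ⟨c, d, hcd⟩ := smooth35 (2*n+3) (by omega) (key _ (Or.inr rfl))
  -- 3 divides at most one, 5 divides at most one
  have h3 : ¬(3 ∣ (2*n+1) ∧ 3 ∣ (2*n+3)) := by
    rintro ⟨⟨x, hx⟩, ⟨y, hy⟩⟩; omega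
  have h5 : ¬(5 ∣ (2*n+1) ∧ 5 ∣ (2*n+3)) := by
    rintro ⟨⟨x, hx⟩, ⟨y, hy⟩⟩; omega
  rcases Nat.eq_zero_or_pos a with ha | ha
  · -- 2*n+1 = 5^b, so b ≥ 1, hence d = 0, hence 2*n+3 = 3^c with c ≥ 1
    rw [ha, pow_zero, one_mul] at hab
    have hb1 : b ≠ 0 := by
      intro h0; rw [h0] at hab; norm_num at hab; omega
    have hd0 : d = 0 := by
      by_contra hd
      refine h5 ⟨?_, ?_⟩
      · rw [hab]; exact dvd_pow_self 5 hb1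
      · rw [hcd]; exact dvd_mul_of_dvd_right (dvd_pow_self 5 hd) _
    rw [hd0, pow_zero, mul_one] at hcd
    have heq : 3^c = 5^b + 2 := by omega
    have hb2 : 2 ≤ b := by
      by_contra h'
      push_neg at h'
      interval_cases b <;> omega
    obtain ⟨_, hb⟩ := caseA c b hb2 heq
    rw [hb] at hab; norm_num at hab; omega
  · -- 3 ∣ 2*n+1, so c = 0; then b = 0 (else d = 0 and 2*n+3 = 1)
    have h31 : (3:ℕ) ∣ 2*n+1 := by
      rw [hab]; exact dvd_mul_of_dvd_left (dvd_pow_self 3 (by omega)) _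
    have hc0 : c = 0 := by
      by_contra hc
      exact h3 ⟨h31, by rw [hcd]; exact dvd_mul_of_dvd_left (dvd_pow_self 3 hc) _⟩
    rw [hc0, pow_zero, one_mul] at hcd
    have hb0 : b = 0 := by
      by_contra hbne
      have h51 : (5:ℕ) ∣ 2*n+1 := by
        rw [hab]; exact dvd_mul_of_dvd_right (dvd_pow_self 5 hbne) _
      have hd0 : d = 0 := by
        by_contra hd
        exact h5 ⟨h51, by rw [hcd]; exact dvd_pow_self 5 hd⟩
      rw [hd0] at hcd; norm_num at hcd; omega
    rw [hb0, pow_zero, mul_one] at hab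
    have hd1 : d ≠ 0 := by
      intro h0; rw [h0] at hcd; norm_num at hcd; omega
    have heq : 5^d = 3^a + 2 := by omega
    have ha2 : 2 ≤ a := by
      by_contra h'
      push_neg at h'
      interval_cases a <;> omega
    exact caseB a d ha2 heq
end
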